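/- arXiv:math/0611020 — 2 statements merged into one kernel-verified Lean document; each statement's English description precedes it below -/
import Mathlib

section
/- Let V be a finite set of monomials of degree d in K[x_1,...,x_n]. Then V is strongly stable (i.e., u·x_q ∈ V and 1 ≤ p < q imply u·x_p ∈ V) if and only if (i) each set D_k(V) = {u/x_k : u ∈ V, max(u) = k} is strongly stable for k = 1,...,n, and (ii) M_{≤k-1}(D_k(V)) ⊆ D_{k-1}(V) for k = 2,...,n, where M_{≤j}(W) denotes the set of monomials u ∈ W with max(u) ≤ j. -/
set_option synthInstance.maxHeartbeats 1000000
set_option maxHeartbeats 1000000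

open MvPolynomial

namespace Paper

/-! ### Combinatorics of monomials -/

/-- a monomial in `n` variables, encoded by its exponent vector -/
abbrev Mono (n : ℕ) := Fin n →₀ ℕ

/-- total degree of a monomial -/
def mdeg {n : ℕ} (u : Mono n) : ℕ := u.sum fun _ e => e

/-- `maxVar u` is the largest index (1-indexed) of a variable dividing `u`; `maxVar 1 = 0`. -/
def maxVar {n : ℕ} (u : Mono n) : ℕ := u.support.sup fun i => (i : ℕ) + 1

/-- `LexGT u v` : `u >_lex v` (lexicographic order with `x_1 > x_2 > ⋯ > x_n`). -/
def LexGT {n : ℕ} (u v : Mono n) : Prop :=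
  ∃ i : Fin n, v i < u i ∧ ∀ j : Fin n, j < i → u j = v j

/-- strongly stable set of monomials -/
def SStableSet {n : ℕ} (V : Set (Mono n)) : Prop :=
  ∀ u : Mono n, ∀ p q : Fin n, p < q → u + Finsupp.single q 1 ∈ V →
    u + Finsupp.single p 1 ∈ V

/-- `Dk V k = { u / x_k : u ∈ V, max(u) = k }` (here `k : Fin n` is the 0-indexed variable,
corresponding to the 1-indexed variable `k+1`) -/
def Dk {n : ℕ} (V : Set (Mono n)) (k : Fin n) : Set (Mono n) :=
  {w | w + Finsupp.single k 1 ∈ V ∧ maxVar (w + Finsupp.single k 1) = (k : ℕ) + 1}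

/-- `Mle j W = { u ∈ W : max(u) ≤ j }` -/
def Mle {n : ℕ} (j : ℕ) (W : Set (Mono n)) : Set (Mono n) := {u ∈ W | maxVar u ≤ j}

/-- `L` is a lexsegment set of monomials inside `K[x_1,…,x_k]`. -/
def LexSegIn {n : ℕ} (k : ℕ) (L : Set (Mono n)) : Prop :=
  (∀ u ∈ L, maxVar u ≤ k) ∧
  ∀ u ∈ L, ∀ v : Mono n, mdeg v = mdeg u → maxVar v ≤ k → LexGT v u → v ∈ L

/-- `V` is a `d`-linear lexsegment set of monomials of degree `d`. -/
def DLinearLexSeg {n : ℕ} (d : ℕ) (V : Set (Mono n)) : Prop :=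
  (∀ u ∈ V, mdeg u = d) ∧ SStableSet V ∧
    ∀ k : Fin n, LexSegIn ((k : ℕ) + 1) (Dk V k)

lemma maxVar_le_iff {n : ℕ} (u : Mono n) (m : ℕ) :
    maxVar u ≤ m ↔ ∀ i : Fin n, u i ≠ 0 → (i : ℕ) + 1 ≤ m := by
  simp [maxVar, Finset.sup_le_iff, Finsupp.mem_support_iff]

lemma le_maxVar {n : ℕ} (u : Mono n) (i : Fin n) (h : u i ≠ 0) : (i : ℕ) + 1 ≤ maxVar u :=
  Finset.le_sup (f := fun i : Fin n => (i : ℕ) + 1) (Finsupp.mem_support_iff.mpr h)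

lemma maxVar_add_single {n : ℕ} (w : Mono n) (k : Fin n) :
    maxVar (w + Finsupp.single k 1) = max (maxVar w) ((k : ℕ) + 1) := by
  apply le_antisymm
  · rw [maxVar_le_iff]
    intro i hi
    rcases eq_or_ne i k with rfl | hik
    · exact le_max_of_le_right le_rfl
    · have h0 : (Finsupp.single k 1 : Mono n) i = 0 := Finsupp.single_eq_of_ne' (Ne.symm hik)
      have : w i ≠ 0 := by
        simp only [Finsupp.add_apply, h0, add_zero] at hi
        exact hi
      exact le_max_of_le_left (le_maxVar w i this)
  · apply max_le
    · rw [maxVar_le_iff]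
      intro i hi
      apply le_maxVar
      simp only [Finsupp.add_apply]
      omega
    · apply le_maxVar
      simp [Finsupp.single_apply]

lemma exists_of_maxVar_pos {n : ℕ} (u : Mono n) (h : 0 < maxVar u) :
    ∃ i : Fin n, u i ≠ 0 ∧ (i : ℕ) + 1 = maxVar u := by
  have hne : u.support.Nonempty := by
    by_contra hc
    rw [Finset.not_nonempty_iff_eq_empty] at hc
    simp [maxVar, hc] at h
  obtain ⟨i, hi, hEq⟩ := Finset.exists_mem_eq_sup u.support hne (fun i : Fin n => (i : ℕ) + 1)
  exact ⟨i, Finsupp.mem_support_iff.mp hi, hEq.symm⟩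

lemma sub_add_single {n : ℕ} (u : Mono n) (k : Fin n) (h : u k ≠ 0) :
    u - Finsupp.single k 1 + Finsupp.single k 1 = u := by
  apply tsub_add_cancel_of_le
  rw [Finsupp.single_le_iff]
  omega

/-- Lemma: characterization of strongly stable sets via `D_k` and `M_{≤k-1}`. -/
theorem stmt0 (n d : ℕ) (V : Finset (Mono n)) (hdeg : ∀ u ∈ V, mdeg u = d) :
    SStableSet (V : Set (Mono n)) ↔
      ((∀ k : Fin n, SStableSet (Dk (V : Set (Mono n)) k)) ∧
       ∀ k : Fin n, ∀ hk : 0 < (k : ℕ),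
         Mle ((k : ℕ)) (Dk (V : Set (Mono n)) k) ⊆
           Dk (V : Set (Mono n)) ⟨(k : ℕ) - 1, by omega⟩) := by
  constructor
  · intro hV
    constructor
    · intro k u p q hpq ⟨hmem, hmax⟩
      constructor
      · have h := hV (u + Finsupp.single k 1) p q hpq (by
          rw [add_right_comm]; exact hmem)
        rw [add_right_comm] at h
        exact h
      · rw [maxVar_add_single, maxVar_add_single] at *
        have hp : (p : ℕ) < q := hpq
        omega
    · intro k hk u ⟨⟨hmem, hmax⟩, hle⟩
      have hk' : (⟨(k : ℕ) - 1, by omega⟩ : Fin n) < k := by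
        rw [Fin.lt_def]; simp; omega
      refine ⟨hV u _ k hk' hmem, ?_⟩
      rw [maxVar_add_single]
      simp only []
      omega
  · rintro ⟨h1, h2⟩
    have main : ∀ m : ℕ, ∀ q : Fin n, (q : ℕ) ≤ m → ∀ u : Mono n, ∀ p : Fin n, p < q →
        u + Finsupp.single q 1 ∈ V → u + Finsupp.single p 1 ∈ V := by
      intro m
      induction m with
      | zero =>
        intro q hq u p hpq _
        have : (p : ℕ) < q := hpq
        omega
      | succ m ih =>
        intro q hq u p hpq hmem
        have hMpos : 0 < maxVar (u + Finsupp.single q 1) := by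
          have := le_maxVar (u + Finsupp.single q 1) q (by simp)
          omega
        obtain ⟨k, hk0, hkM⟩ := exists_of_maxVar_pos _ hMpos
        have hqk : (q : ℕ) + 1 ≤ (k : ℕ) + 1 := by
          rw [hkM]
          exact le_maxVar _ q (by simp)
        rcases eq_or_ne q k with rfl | hne
        · -- q = k
          rcases eq_or_ne (u q) 0 with huk | huk
          · -- u q = 0 : use M_{≤ k} ⊆ D_{k-1}
            have hqpos : 0 < (q : ℕ) := by
              have : (p : ℕ) < q := hpq
              omega
            have huD : u ∈ Dk (V : Set (Mono n)) q := ⟨hmem, hkM.symm⟩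
            have humax : maxVar u ≤ (q : ℕ) := by
              rw [maxVar_le_iff]
              intro i hi
              have h1' : (i : ℕ) + 1 ≤ maxVar (u + Finsupp.single q 1) :=
                le_maxVar _ i (by simp only [Finsupp.add_apply]; omega)
              have hne' : i ≠ q := by
                intro h; subst h; exact hi huk
              have : (i : ℕ) ≠ (q : ℕ) := fun h => hne' (Fin.ext h)
              omega
            have := h2 q hqpos ⟨huD, humax⟩
            obtain ⟨hmem', _⟩ := this
            rcases eq_or_ne (p : ℕ) ((q : ℕ) - 1) with hp | hp
            · have : p = (⟨(q : ℕ) - 1, by omega⟩ : Fin n) := Fin.ext hp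
              rw [this]; exact hmem'
            · have hpq' : p < (⟨(q : ℕ) - 1, by omega⟩ : Fin n) := by
                rw [Fin.lt_def]
                have : (p : ℕ) < q := hpq
                simp; omega
              exact ih ⟨(q : ℕ) - 1, by omega⟩ (by simp; omega) u p hpq' hmem'
          · -- u q ≠ 0 : use stability of D_q
            set u' := u - Finsupp.single q 1 with hu'
            have hcan : u' + Finsupp.single q 1 = u := sub_add_single u q huk
            have hD : u' + Finsupp.single q 1 ∈ Dk (V : Set (Mono n)) q := by
              refine ⟨?_, ?_⟩
              · rw [hcan]; exact hmem
              · rw [hcan]; exact hkM.symm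
            have := h1 q u' p q hpq hD
            obtain ⟨hmem', _⟩ := this
            rw [add_right_comm, hcan] at hmem'
            exact hmem'
        · -- q < k : u k ≠ 0, use stability of D_k
          have hukne : u k ≠ 0 := by
            have : (Finsupp.single q 1 : Mono n) k = 0 := by
              simp [Finsupp.single_apply, Fin.ext_iff]
              intro h; exact (hne (Fin.ext h)).elim
            simp only [Finsupp.add_apply, this, add_zero] at hk0
            exact hk0
          set u' := u - Finsupp.single k 1 with hu'
          have hcan : u' + Finsupp.single k 1 = u := sub_add_single u k hukne
          have hpk : p < k := by
            rw [Fin.lt_def]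
            have : (p : ℕ) < q := hpq
            have : (q : ℕ) ≠ k := fun h => hne (Fin.ext h)
            omega
          have hqk' : q < k := by
            rw [Fin.lt_def]
            have : (q : ℕ) ≠ k := fun h => hne (Fin.ext h)
            omega
          have hD : u' + Finsupp.single q 1 ∈ Dk (V : Set (Mono n)) k := by
            refine ⟨?_, ?_⟩
            · rw [add_right_comm, hcan]; exact hmem
            · rw [add_right_comm, hcan]; exact hkM.symm
          have := h1 k u' p q hpq hD
          obtain ⟨hmem', _⟩ := this
          rw [add_right_comm, hcan] at hmem'
          exact hmem'
    intro u p q hpq hmem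
    exact main (q : ℕ) q le_rfl u p hpq hmem

end Paper
end

section
/- If I and J are d-lexsegment monomial ideals in S = K[x_1,...,x_n] with the same Hilbert function, then I = J. -/
set_option synthInstance.maxHeartbeats 1000000
set_option maxHeartbeats 1000000

open MvPolynomial

namespace Paper

/-! ### Ideal-level notions -/

variable {n : ℕ} {K : Type} [Field K]

/-- `I` is a monomial ideal. -/
def MonomialIdeal (I : Ideal (MvPolynomial (Fin n) K)) : Prop :=
  ∀ p ∈ I, ∀ m ∈ p.support, (monomial m (1 : K)) ∈ I

/-- `u` is a minimal monomial generator of the monomial ideal `I`. -/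
def MinGen (I : Ideal (MvPolynomial (Fin n) K)) (u : Mono n) : Prop :=
  monomial u (1 : K) ∈ I ∧ ∀ v : Mono n, v ≤ u → v ≠ u → monomial v (1 : K) ∉ I

/-- stable monomial ideal -/
def StableIdeal (I : Ideal (MvPolynomial (Fin n) K)) : Prop :=
  MonomialIdeal I ∧
  ∀ u : Mono n, ∀ q : Fin n, maxVar u = (q : ℕ) + 1 → monomial u (1 : K) ∈ I →
    ∀ p : Fin n, p < q →
      monomial (u - Finsupp.single q 1 + Finsupp.single p 1) (1 : K) ∈ I

/-- strongly stable monomial ideal -/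
def SStableIdeal (I : Ideal (MvPolynomial (Fin n) K)) : Prop :=
  MonomialIdeal I ∧
  ∀ u : Mono n, ∀ q : Fin n, 0 < u q → monomial u (1 : K) ∈ I →
    ∀ p : Fin n, p < q →
      monomial (u - Finsupp.single q 1 + Finsupp.single p 1) (1 : K) ∈ I

/-- the set of (exponent vectors of) monomials of degree `k` lying in `I` -/
def monSlice (I : Ideal (MvPolynomial (Fin n) K)) (k : ℕ) : Set (Mono n) :=
  {u | mdeg u = k ∧ monomial u (1 : K) ∈ I}

/-- homogeneous (graded) ideal -/
def HomIdeal (I : Ideal (MvPolynomial (Fin n) K)) : Prop :=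
  ∀ p ∈ I, ∀ k : ℕ, homogeneousComponent k p ∈ I

/-! ### Graded components and Hilbert functions -/

/-- the degree-`z` homogeneous component of `I`, as a `K`-subspace -/
noncomputable def hComp (I : Ideal (MvPolynomial (Fin n) K)) (z : ℤ) :
    Submodule K (MvPolynomial (Fin n) K) :=
  if 0 ≤ z then
    (Submodule.restrictScalars K I) ⊓ homogeneousSubmodule (Fin n) K z.toNat
  else ⊥

/-- Hilbert function `H(I,t)` of the ideal `I` -/
noncomputable def hfI (I : Ideal (MvPolynomial (Fin n) K)) (t : ℕ) : ℕ :=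
  Module.finrank K (hComp I (t : ℤ))

/-- Hilbert function `H(S/I,t)` of the quotient `S/I` -/
noncomputable def hfQ (I : Ideal (MvPolynomial (Fin n) K)) (t : ℕ) : ℕ :=
  Module.finrank K
    (homogeneousSubmodule (Fin n) K t ⧸
      Submodule.comap (homogeneousSubmodule (Fin n) K t).subtype
        (Submodule.restrictScalars K I))

/-- lexsegment ideal -/
def LexIdeal (I : Ideal (MvPolynomial (Fin n) K)) : Prop :=
  MonomialIdeal I ∧ ∀ k : ℕ, LexSegIn n (monSlice I k)

/-- `d`-lexsegment ideal: `I_{≥d}` is generated by a `d`-linear lexsegment set of monomials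
of degree `d`, and `I_k` is lexsegment for all `k < d`. -/
def DLexIdeal (d : ℕ) (I : Ideal (MvPolynomial (Fin n) K)) : Prop :=
  MonomialIdeal I ∧
  DLinearLexSeg d (monSlice I d) ∧
  (∀ u : Mono n, d ≤ mdeg u → monomial u (1 : K) ∈ I → ∃ v ∈ monSlice I d, v ≤ u) ∧
  (∀ k : ℕ, k < d → LexSegIn n (monSlice I k))

/-! ### Auxiliary lemmas for the proof of Statement 7 -/

section Aux

lemma mdeg_degree (u : Mono n) : mdeg u = u.degree := rfl

lemma mdeg_add (u v : Mono n) : mdeg (u + v) = mdeg u + mdeg v :=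
  Finsupp.sum_add_index' (fun _ => rfl) (fun _ _ _ => rfl)

lemma mdeg_single (i : Fin n) (k : ℕ) : mdeg (Finsupp.single i k) = k :=
  Finsupp.sum_single_index rfl

lemma mdeg_eq_sum (u : Mono n) : mdeg u = ∑ i, u i :=
  Finsupp.sum_fintype _ _ (fun _ => rfl)

lemma mdeg_mono {u v : Mono n} (h : u ≤ v) : mdeg u ≤ mdeg v := by
  rw [mdeg_eq_sum, mdeg_eq_sum]
  exact Finset.sum_le_sum fun i _ => Finsupp.le_def.mp h i

lemma support_nonempty_of_mdeg_pos {u : Mono n} (h : 0 < mdeg u) : u.support.Nonempty := by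
  rcases Finset.eq_empty_or_nonempty u.support with he | hne
  · have : u = 0 := Finsupp.support_eq_empty.mp he
    subst this
    simp [mdeg] at h
  · exact hne

lemma maxVar_eq_iff {u : Mono n} {i : Fin n} :
    maxVar u = (i : ℕ) + 1 ↔ i ∈ u.support ∧ ∀ j ∈ u.support, j ≤ i := by
  constructor
  · intro h
    have hne : u.support.Nonempty := by
      rcases Finset.eq_empty_or_nonempty u.support with he | hne
      · rw [maxVar, he] at h; simp at h
      · exact hne
    obtain ⟨b, hb, hsup⟩ := Finset.exists_mem_eq_sup u.support hne (fun j : Fin n => (j : ℕ) + 1)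
    have hb1 : (b : ℕ) + 1 = (i : ℕ) + 1 := by
      rw [← hsup, ← h]; rfl
    have hbi : b = i := Fin.ext (by omega)
    refine ⟨hbi ▸ hb, fun j hj => ?_⟩
    have hle : (j : ℕ) + 1 ≤ (i : ℕ) + 1 := by
      rw [← h]; exact Finset.le_sup (f := fun j : Fin n => (j : ℕ) + 1) hj
    exact Fin.le_def.mpr (by omega)
  · rintro ⟨hi, hle⟩
    refine le_antisymm (Finset.sup_le fun j hj => ?_) ?_
    · have := Fin.le_def.mp (hle j hj); omega
    · exact Finset.le_sup (f := fun j : Fin n => (j : ℕ) + 1) hi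

lemma finite_of_mdeg_eq {t : ℕ} {S : Set (Mono n)} (hS : ∀ u ∈ S, mdeg u = t) : S.Finite :=
  (Finsupp.finite_of_degree_le t).subset fun u hu => le_of_eq (hS u hu)

lemma monomial_mem_of_le {I : Ideal (MvPolynomial (Fin n) K)} {v u : Mono n}
    (hv : monomial v (1 : K) ∈ I) (hle : v ≤ u) : monomial u (1 : K) ∈ I := by
  have : monomial u (1 : K) = monomial (u - v) (1 : K) * monomial v 1 := by
    rw [monomial_mul, one_mul, tsub_add_cancel_of_le hle]
  rw [this]
  exact Ideal.mul_mem_left _ _ hv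

/-- Monomial ideals with the same monomials coincide. -/
lemma monomialIdeal_ext {I J : Ideal (MvPolynomial (Fin n) K)}
    (hI : MonomialIdeal I) (hJ : MonomialIdeal J)
    (h : ∀ t, monSlice I t = monSlice J t) : I = J := by
  have key : ∀ (I J : Ideal (MvPolynomial (Fin n) K)), MonomialIdeal I →
      (∀ t, monSlice I t = monSlice J t) → I ≤ J := by
    intro I J hI h p hp
    rw [p.as_sum]
    apply Ideal.sum_mem
    intro m hm
    have h1 : monomial m (1 : K) ∈ I := hI p hp m hm
    have h2 : m ∈ monSlice I (mdeg m) := ⟨rfl, h1⟩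
    rw [h (mdeg m)] at h2
    have h3 : monomial m (coeff m p) = C (coeff m p) * monomial m (1 : K) := by
      rw [C_mul_monomial, mul_one]
    rw [h3]
    exact Ideal.mul_mem_left _ _ h2.2
  exact le_antisymm (key I J hI h) (key J I hJ fun t => (h t).symm)

/-! #### The Hilbert function of a monomial ideal counts monomials -/

lemma hfI_eq_ncard {I : Ideal (MvPolynomial (Fin n) K)} (hIm : MonomialIdeal I) (t : ℕ) :
    hfI I t = (monSlice I t).ncard := by
  classical
  have hspan : (Submodule.restrictScalars K I ⊓ homogeneousSubmodule (Fin n) K t)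
      = Submodule.span K ((fun u : Mono n => monomial u (1 : K)) '' monSlice I t) := by
    apply le_antisymm
    · intro p hp
      rw [Submodule.mem_inf] at hp
      obtain ⟨hpI, hph⟩ := hp
      rw [Submodule.restrictScalars_mem] at hpI
      rw [mem_homogeneousSubmodule] at hph
      nth_rewrite 1 [p.as_sum]
      apply Submodule.sum_mem
      intro m hm
      have h1 : monomial m (1 : K) ∈ I := hIm p hpI m hm
      have h2 : mdeg m = t := by
        by_contra hc
        exact (MvPolynomial.mem_support_iff.mp hm) (hph.coeff_eq_zero hc)
      have h3 : (fun u : Mono n => monomial u (1 : K)) m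
          ∈ (fun u : Mono n => monomial u (1 : K)) '' monSlice I t :=
        Set.mem_image_of_mem _ (⟨h2, h1⟩ : m ∈ monSlice I t)
      have h4 : monomial m (coeff m p) = (coeff m p) • monomial m (1 : K) := by
        rw [smul_monomial, smul_eq_mul, mul_one]
      rw [h4]
      exact Submodule.smul_mem _ _ (Submodule.subset_span h3)
    · rw [Submodule.span_le]
      rintro q ⟨u, ⟨hu1, hu2⟩, rfl⟩
      have : (fun u : Mono n => monomial u (1 : K)) u
          ∈ (Submodule.restrictScalars K I ⊓ homogeneousSubmodule (Fin n) K t) :=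
        Submodule.mem_inf.mpr ⟨(Submodule.restrictScalars_mem K I _).mpr hu2,
          (mem_homogeneousSubmodule _ _).mpr (isHomogeneous_monomial _ hu1)⟩
      exact this
  have hfin : ((fun u : Mono n => monomial u (1 : K)) '' monSlice I t).Finite :=
    (finite_of_mdeg_eq (fun u (hu : u ∈ monSlice I t) => hu.1)).image _
  haveI := hfin.fintype
  have hli : LinearIndependent K
      ((↑) : ((fun u : Mono n => monomial u (1 : K)) '' monSlice I t) →
        MvPolynomial (Fin n) K) := by
    show LinearIndepOn K id ((fun u : Mono n => monomial u (1 : K)) '' monSlice I t)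
    refine (fun h1 h2 => LinearIndepOn.mono (R := K) (v := id)
      (s := Set.range (⇑(basisMonomials (Fin n) K))) h2 h1) ?_ ?_
    · rintro q ⟨u, _, rfl⟩
      exact ⟨u, by rw [coe_basisMonomials]⟩
    · exact (basisMonomials (Fin n) K).linearIndependent.linearIndepOn_id
  have hz : (0 : ℤ) ≤ (t : ℤ) := Int.natCast_nonneg t
  rw [hfI, hComp, if_pos hz, Int.toNat_natCast, hspan, finrank_span_set_eq_card hli,
    Set.toFinset_card, ← Nat.card_eq_fintype_card, Nat.card_coe_set_eq,
    Set.ncard_image_of_injective _ (monomial_left_injective (one_ne_zero))]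

/-! #### Lexsegment sets are determined by their cardinality -/

lemma lexGT_total {u v : Mono n} (hne : u ≠ v) : LexGT u v ∨ LexGT v u := by
  classical
  have hex : ∃ j, u j ≠ v j := by
    by_contra hc
    push_neg at hc
    exact hne (Finsupp.ext hc)
  set F := Finset.univ.filter (fun j : Fin n => u j ≠ v j) with hF
  have hFne : F.Nonempty := by
    obtain ⟨j, hj⟩ := hex
    exact ⟨j, by simp [hF, hj]⟩
  set i := F.min' hFne with hi
  have hiF : i ∈ F := F.min'_mem hFne
  have hne' : u i ≠ v i := by
    have := Finset.mem_filter.mp hiF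
    exact this.2
  have hmin : ∀ j, j < i → u j = v j := by
    intro j hj
    by_contra hc
    have hjF : j ∈ F := by simp [hF, hc]
    exact absurd hj (not_lt.mpr (F.min'_le j hjF))
  rcases lt_or_gt_of_ne hne' with hlt | hlt
  · exact Or.inr ⟨i, hlt, fun j hj => (hmin j hj).symm⟩
  · exact Or.inl ⟨i, hlt, fun j hj => hmin j hj⟩

lemma lexseg_unique {t k : ℕ} {A B : Set (Mono n)}
    (hAt : ∀ u ∈ A, mdeg u = t) (hBt : ∀ u ∈ B, mdeg u = t)
    (hA : LexSegIn k A) (hB : LexSegIn k B) (hAf : A.Finite) (hBf : B.Finite)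
    (hcard : A.ncard = B.ncard) : A = B := by
  have key : ∀ (A B : Set (Mono n)), (∀ u ∈ A, mdeg u = t) → (∀ u ∈ B, mdeg u = t) →
      LexSegIn k A → LexSegIn k B → (A \ B).Nonempty → B ⊂ A := by
    rintro A B hAt hBt hA hB ⟨u, huA, huB⟩
    rw [Set.ssubset_iff_subset_ne]
    constructor
    · intro v hvB
      rcases eq_or_ne v u with rfl | hne
      · exact absurd hvB huB
      rcases lexGT_total hne with hlt | hlt
      · -- LexGT v u, so v ∈ A
        exact hA.2 u huA v (by rw [hBt v hvB, hAt u huA]) (hB.1 v hvB) hlt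
      · -- LexGT u v, so u ∈ B : contradiction
        exact absurd (hB.2 v hvB u (by rw [hBt v hvB, hAt u huA]) (hA.1 u huA) hlt) huB
    · intro hEq
      exact huB (hEq ▸ huA)
  by_contra hne
  by_cases hsub : A ⊆ B
  · rcases Set.eq_empty_or_nonempty (B \ A) with he | hne'
    · exact hne (Set.Subset.antisymm hsub (Set.diff_eq_empty.mp he))
    · have hAB := key B A hBt hAt hB hA hne'
      have := Set.ncard_lt_ncard hAB hBf
      omega
  · obtain ⟨u, huA, huB⟩ := Set.not_subset.mp hsub
    have hBA := key A B hAt hBt hA hB ⟨u, huA, huB⟩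
    have := Set.ncard_lt_ncard hBA hAf
    omega

/-! #### Eliahou–Kervaire decomposition for the degrees above `d` -/

/-- `max v ≤ min z` encoded via supports. -/
def MinOK (v z : Mono n) : Prop := ∀ j ∈ z.support, ∀ p ∈ v.support, p ≤ j

lemma le_sub_single {v u : Mono n} {m : Fin n} (hvu : v ≤ u) (hvm : v m < u m) :
    v ≤ u - Finsupp.single m 1 := by
  rw [Finsupp.le_def]
  intro j
  rw [Finsupp.tsub_apply]
  rcases eq_or_ne m j with rfl | hne
  · rw [Finsupp.single_eq_same]
    omega
  · rw [Finsupp.single_eq_of_ne' hne]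
    have := Finsupp.le_def.mp hvu j
    omega

lemma descent {V : Set (Mono n)} {d : ℕ} (hss : SStableSet V) (hdV : ∀ v ∈ V, mdeg v = d)
    {u : Mono n} (hu : d < mdeg u) {m : Fin n} (hm : ∀ j ∈ u.support, j ≤ m)
    (hmem : m ∈ u.support) :
    ∀ (N : ℕ) (v : Mono n), v ∈ V → v ≤ u → v m ≤ N →
      ∃ v' ∈ V, v' ≤ u - Finsupp.single m 1 := by
  have hum : 0 < u m := Nat.pos_of_ne_zero (Finsupp.mem_support_iff.mp hmem)
  intro N
  induction N with
  | zero =>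
    intro v hv hvu hvm
    exact ⟨v, hv, le_sub_single hvu (by omega)⟩
  | succ N ih =>
    intro v hv hvu hvm
    by_cases hcase : v m < u m
    · exact ⟨v, hv, le_sub_single hvu hcase⟩
    · have hvm' : v m = u m := le_antisymm (Finsupp.le_def.mp hvu m) (by omega)
      have hex : ∃ p, v p < u p := by
        by_contra hc
        push_neg at hc
        have : mdeg u ≤ mdeg v := mdeg_mono (Finsupp.le_def.mpr hc)
        have := hdV v hv
        omega
      obtain ⟨p, hp⟩ := hex
      have hpm : p ≠ m := fun he => by rw [he] at hp; omega
      have hpmem : p ∈ u.support := Finsupp.mem_support_iff.mpr (by omega)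
      have hplt : p < m := lt_of_le_of_ne (hm p hpmem) hpm
      have hcancel : (v - Finsupp.single m 1) + Finsupp.single m 1 = v :=
        tsub_add_cancel_of_le (Finsupp.single_le_iff.mpr (by omega))
      have hv' : (v - Finsupp.single m 1) + Finsupp.single p 1 ∈ V := by
        apply hss (v - Finsupp.single m 1) p m hplt
        rw [hcancel]
        exact hv
      set v' := (v - Finsupp.single m 1) + Finsupp.single p 1 with hv'def
      have hv'u : v' ≤ u := by
        rw [Finsupp.le_def]
        intro j
        rw [hv'def, Finsupp.add_apply, Finsupp.tsub_apply]
        have h1 := Finsupp.le_def.mp hvu j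
        rcases eq_or_ne m j with rfl | hmj
        · rw [Finsupp.single_eq_same, Finsupp.single_eq_of_ne' hpm]
          omega
        · rw [Finsupp.single_eq_of_ne' hmj]
          rcases eq_or_ne p j with rfl | hpj
          · rw [Finsupp.single_eq_same]
            omega
          · rw [Finsupp.single_eq_of_ne' hpj]
            omega
      have hv'm : v' m ≤ N := by
        rw [hv'def, Finsupp.add_apply, Finsupp.tsub_apply, Finsupp.single_eq_same,
          Finsupp.single_eq_of_ne' hpm]
        omega
      exact ih v' hv' hv'u hv'm

lemma EK_exists {d : ℕ} (hd : 0 < d) {I : Ideal (MvPolynomial (Fin n) K)}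
    (hss : SStableSet (monSlice I d))
    (hgen : ∀ u : Mono n, d ≤ mdeg u → monomial u (1 : K) ∈ I → ∃ v ∈ monSlice I d, v ≤ u) :
    ∀ (s : ℕ) (u : Mono n), mdeg u = d + s → monomial u (1 : K) ∈ I →
      ∃ v z : Mono n, v ∈ monSlice I d ∧ u = v + z ∧ MinOK v z := by
  intro s
  induction s with
  | zero =>
    intro u hdeg hu
    exact ⟨u, 0, ⟨hdeg, hu⟩, (add_zero u).symm, fun j hj => by simp at hj⟩
  | succ s ih =>
    intro u hdeg hu
    have hpos : 0 < mdeg u := by omega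
    have hne := support_nonempty_of_mdeg_pos hpos
    set m := u.support.max' hne with hm
    have hmax : ∀ j ∈ u.support, j ≤ m := fun j hj => Finset.le_max' _ j hj
    have hmem : m ∈ u.support := Finset.max'_mem _ _
    obtain ⟨v0, hv0, hv0u⟩ := hgen u (by omega) hu
    have hdV : ∀ v ∈ monSlice I d, mdeg v = d := fun v hv => hv.1
    obtain ⟨v', hv', hv'le⟩ :=
      descent hss hdV (by omega) hmax hmem (v0 m) v0 hv0 hv0u le_rfl
    have hsingle_le : Finsupp.single m 1 ≤ u :=
      Finsupp.single_le_iff.mpr (Nat.pos_of_ne_zero (Finsupp.mem_support_iff.mp hmem))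
    have hcancel : (u - Finsupp.single m 1) + Finsupp.single m 1 = u :=
      tsub_add_cancel_of_le hsingle_le
    have hu' : mdeg (u - Finsupp.single m 1) = d + s := by
      have h2 := congrArg mdeg hcancel
      rw [mdeg_add, mdeg_single] at h2
      omega
    have humem : monomial (u - Finsupp.single m 1) (1 : K) ∈ I :=
      monomial_mem_of_le hv'.2 hv'le
    obtain ⟨v, z, hvV, hdecomp, hmin⟩ := ih _ hu' humem
    refine ⟨v, z + Finsupp.single m 1, hvV, ?_, ?_⟩
    · rw [← add_assoc, ← hdecomp, hcancel]
    · intro j hj p hp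
      rcases Finset.mem_union.mp (Finsupp.support_add hj) with hj' | hj'
      · exact hmin j hj' p hp
      · have hjm : j = m := Finset.mem_singleton.mp (Finsupp.support_single_subset hj')
        subst hjm
        have hvu : v ≤ u := by
          calc v ≤ v + z := le_add_right le_rfl
          _ = u - Finsupp.single m 1 := hdecomp.symm
          _ ≤ u := tsub_le_self
        have hpu : p ∈ u.support := by
          rw [Finsupp.mem_support_iff] at hp ⊢
          have := Finsupp.le_def.mp hvu p
          omega
        exact hmax p hpu

lemma EK_unique_aux {v z v' z' : Mono n} (hdeg : mdeg v = mdeg v')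
    (h2 : MinOK v' z') (he : v + z = v' + z') {i : Fin n}
    (hmin : ∀ j, j < i → v j = v' j) (hlt : v' i < v i) : False := by
  have happ : v i + z i = v' i + z' i := by
    have h := congrArg (fun f : Mono n => f i) he
    simpa [Finsupp.add_apply] using h
  have hz' : 0 < z' i := by omega
  have hi : i ∈ z'.support := Finsupp.mem_support_iff.mpr (by omega)
  have hv'le : ∀ p ∈ v'.support, p ≤ i := fun p hp => h2 i hi p hp
  have hcon : mdeg v' < mdeg v := by
    rw [mdeg_eq_sum, mdeg_eq_sum]
    apply Finset.sum_lt_sum (fun p _ => ?_) ⟨i, Finset.mem_univ i, hlt⟩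
    rcases lt_trichotomy p i with hp | hp | hp
    · exact le_of_eq (hmin p hp).symm
    · subst hp; exact hlt.le
    · have hns : p ∉ v'.support := fun hmem => absurd (hv'le p hmem) (not_le.mpr hp)
      rw [Finsupp.notMem_support_iff.mp hns]
      exact Nat.zero_le _
  omega

lemma EK_unique {v z v' z' : Mono n} (hdeg : mdeg v = mdeg v')
    (h1 : MinOK v z) (h2 : MinOK v' z') (he : v + z = v' + z') : v = v' := by
  classical
  by_contra hne
  have hex : ∃ j, v j ≠ v' j := by
    by_contra hc
    push_neg at hc
    exact hne (Finsupp.ext hc)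
  set F := Finset.univ.filter (fun j : Fin n => v j ≠ v' j) with hF
  have hFne : F.Nonempty := by
    obtain ⟨j, hj⟩ := hex
    exact ⟨j, by simp [hF, hj]⟩
  set i := F.min' hFne with hi
  have hiF : i ∈ F := F.min'_mem hFne
  have hine : v i ≠ v' i := (Finset.mem_filter.mp hiF).2
  have hmin : ∀ j, j < i → v j = v' j := by
    intro j hj
    by_contra hc
    have hjF : j ∈ F := by simp [hF, hc]
    exact absurd hj (not_lt.mpr (F.min'_le j hjF))
  rcases lt_or_gt_of_ne hine with hlt | hlt
  · exact EK_unique_aux hdeg.symm h1 he.symm (fun j hj => (hmin j hj).symm) hlt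
  · exact EK_unique_aux hdeg h2 he hmin hlt

/-! #### Counting monomials -/

/-- Monomials of degree `s` supported on variables `≥ i`. -/
def ZSet (i : Fin n) (s : ℕ) : Set (Mono n) := {z | mdeg z = s ∧ ∀ j ∈ z.support, i ≤ j}

/-- The elements of `V` with `maxVar` equal to `i+1`. -/
def topVar (V : Set (Mono n)) (i : Fin n) : Set (Mono n) :=
  {u ∈ V | maxVar u = (i : ℕ) + 1}

/-- Monomials of fixed degree with restricted support, counted by stars and bars. -/
lemma ncard_ZSet (i : Fin n) (s : ℕ) :
    (ZSet i s).ncard = (n - 1 - (i : ℕ) + s).choose s := by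
  classical
  have e0 : ↥(ZSet i s) ≃ {u : Mono n // ↑u.support ⊆ Set.Ici i ∧ mdeg u = s} := by
    apply Equiv.subtypeEquivRight
    intro u
    constructor
    · rintro ⟨h1, h2⟩
      exact ⟨fun j hj => h2 j (by simpa using hj), h1⟩
    · rintro ⟨h2, h1⟩
      exact ⟨h1, fun j hj => h2 (by simpa using hj)⟩
  have e1 : {u : Mono n // ↑u.support ⊆ Set.Ici i ∧ mdeg u = s}
      ≃ {x : {u : Mono n // ↑u.support ⊆ Set.Ici i} // mdeg x.1 = s} :=
    (Equiv.subtypeSubtypeEquivSubtypeInter _ _).symm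
  have e2 : {x : {u : Mono n // ↑u.support ⊆ Set.Ici i} // mdeg x.1 = s}
      ≃ {g : ↥(Set.Ici i) →₀ ℕ // g.degree = s} := by
    apply (Finsupp.restrictSupportEquiv (Set.Ici i) ℕ).subtypeEquiv
    intro x
    have : (Finsupp.restrictSupportEquiv (Set.Ici i) ℕ x).degree
        = mdeg x.1 := by
      show Finsupp.sum ((x.1).subtypeDomain (· ∈ Set.Ici i)) (fun _ (e : ℕ) => e)
          = Finsupp.sum x.1 (fun _ (e : ℕ) => e)
      exact Finsupp.sum_subtypeDomain_index (h := fun _ (e : ℕ) => e) (fun a ha => x.2 ha)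
    rw [this]
  have e3 : {g : ↥(Set.Ici i) →₀ ℕ // g.degree = s} ≃ Sym ↥(Set.Ici i) s := by
    apply Equiv.subtypeEquiv (Finsupp.orderIsoMultiset.toEquiv)
    intro g
    show g.degree = s ↔ Multiset.card (Finsupp.toMultiset g) = s
    rw [Finsupp.card_toMultiset]
    rfl
  have hcardIci : Nat.card ↥(Set.Ici i) = n - (i : ℕ) := by
    rw [← Finset.coe_Ici, Nat.card_coe_set_eq, Set.ncard_coe_finset, Fin.card_Ici]
  have hchain : (ZSet i s).ncard = Fintype.card (Sym ↥(Set.Ici i) s) := by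
    rw [← Nat.card_coe_set_eq, Nat.card_congr (((e0.trans e1).trans e2).trans e3),
      Nat.card_eq_fintype_card]
  rw [hchain, Sym.card_sym_eq_choose, ← Nat.card_eq_fintype_card, hcardIci]
  congr 1
  have : (i : ℕ) < n := i.isLt
  omega

lemma topVar_eq_image (V : Set (Mono n)) (i : Fin n) :
    topVar V i = (fun w => w + Finsupp.single i 1) '' Dk V i := by
  ext u
  constructor
  · rintro ⟨huV, hmax⟩
    have hmem : i ∈ u.support := (maxVar_eq_iff.mp hmax).1
    have hle : Finsupp.single i 1 ≤ u :=
      Finsupp.single_le_iff.mpr (Nat.pos_of_ne_zero (Finsupp.mem_support_iff.mp hmem))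
    have hcancel : (u - Finsupp.single i 1) + Finsupp.single i 1 = u :=
      tsub_add_cancel_of_le hle
    exact ⟨u - Finsupp.single i 1, ⟨by rw [hcancel]; exact huV, by rw [hcancel]; exact hmax⟩,
      hcancel⟩
  · rintro ⟨w, ⟨hw1, hw2⟩, rfl⟩
    exact ⟨hw1, hw2⟩

lemma mem_topVar_of_mem {V : Set (Mono n)} {u : Mono n} (hd0 : 0 < mdeg u) (huV : u ∈ V) :
    ∃ i : Fin n, u ∈ topVar V i := by
  have hne := support_nonempty_of_mdeg_pos hd0
  refine ⟨u.support.max' hne, huV, maxVar_eq_iff.mpr ⟨Finset.max'_mem _ _,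
    fun j hj => Finset.le_max' _ j hj⟩⟩

/-- The count of monomials of `I` in degree `d + s`, via EK decomposition. -/
lemma ncard_monSlice_add {d : ℕ} (hd : 0 < d) {I : Ideal (MvPolynomial (Fin n) K)}
    (hss : SStableSet (monSlice I d))
    (hgen : ∀ u : Mono n, d ≤ mdeg u → monomial u (1 : K) ∈ I → ∃ v ∈ monSlice I d, v ≤ u)
    (s : ℕ) :
    (monSlice I (d + s)).ncard
      = ∑ i : Fin n, (topVar (monSlice I d) i).ncard * (n - 1 - (i : ℕ) + s).choose s := by
  classical
  set V := monSlice I d with hV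
  have hdV : ∀ v ∈ V, mdeg v = d := fun v hv => hv.1
  have hmem : ∀ (i : Fin n) (u : ↥(topVar V i)) (z : ↥(ZSet i s)),
      (u : Mono n) + (z : Mono n) ∈ monSlice I (d + s) := by
    rintro i ⟨u, huV, humax⟩ ⟨z, hz1, hz2⟩
    constructor
    · rw [mdeg_add, hdV u huV, hz1]
    · exact monomial_mem_of_le (huV.2) (le_add_right le_rfl)
  let Φ : (Σ i : Fin n, ↥(topVar V i) × ↥(ZSet i s)) → ↥(monSlice I (d + s)) :=
    fun x => ⟨(x.2.1 : Mono n) + (x.2.2 : Mono n), hmem x.1 x.2.1 x.2.2⟩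
  have hminok : ∀ (i : Fin n) (u : ↥(topVar V i)) (z : ↥(ZSet i s)),
      MinOK (u : Mono n) (z : Mono n) := by
    rintro i ⟨u, huV, humax⟩ ⟨z, hz1, hz2⟩ j hj p hp
    have h1 : p ≤ i := (maxVar_eq_iff.mp humax).2 p hp
    have h2 : i ≤ j := hz2 j hj
    exact le_trans h1 h2
  have hbij : Function.Bijective Φ := by
    constructor
    · rintro ⟨i, ⟨u, hu⟩, ⟨z, hz⟩⟩ ⟨i', ⟨u', hu'⟩, ⟨z', hz'⟩⟩ heq
      have he : u + z = u' + z' := congrArg Subtype.val heq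
      have huu : u = u' := EK_unique (by rw [hdV u hu.1, hdV u' hu'.1])
        (hminok i ⟨u, hu⟩ ⟨z, hz⟩) (hminok i' ⟨u', hu'⟩ ⟨z', hz'⟩) he
      have hii : i = i' := by
        have h1 := hu.2
        have h2 := hu'.2
        rw [huu] at h1
        exact Fin.ext (by omega)
      subst hii
      subst huu
      have hzz : z = z' := by
        have := add_left_cancel he
        exact this
      subst hzz
      rfl
    · rintro ⟨w, hw⟩
      obtain ⟨v, z, hvV, hweq, hmin⟩ := EK_exists hd hss hgen s w hw.1 hw.2
      have hvd : 0 < mdeg v := by rw [hdV v hvV]; omega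
      have hne := support_nonempty_of_mdeg_pos hvd
      set i := v.support.max' hne with hidef
      have himem : i ∈ v.support := Finset.max'_mem _ _
      have hmax : maxVar v = (i : ℕ) + 1 :=
        maxVar_eq_iff.mpr ⟨himem, fun j hj => Finset.le_max' _ j hj⟩
      have hzdeg : mdeg z = s := by
        have h5 := congrArg mdeg hweq
        rw [mdeg_add, hdV v hvV] at h5
        have h6 := hw.1
        omega
      have hzsupp : ∀ j ∈ z.support, i ≤ j := fun j hj => hmin j hj i himem
      exact ⟨⟨i, ⟨v, hvV, hmax⟩, ⟨z, hzdeg, hzsupp⟩⟩, Subtype.ext hweq.symm⟩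
  haveI : ∀ i : Fin n, Fintype ↥(topVar V i) := fun i =>
    Set.Finite.fintype (finite_of_mdeg_eq (fun u hu => hdV u hu.1))
  haveI : ∀ i : Fin n, Fintype ↥(ZSet i s) := fun i =>
    Set.Finite.fintype (finite_of_mdeg_eq (fun u (hu : u ∈ ZSet i s) => hu.1))
  calc (monSlice I (d + s)).ncard
      = Nat.card ↥(monSlice I (d + s)) := (Nat.card_coe_set_eq _).symm
    _ = Nat.card (Σ i : Fin n, ↥(topVar V i) × ↥(ZSet i s)) :=
        (Nat.card_congr (Equiv.ofBijective Φ hbij)).symm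
    _ = ∑ i : Fin n, (topVar V i).ncard * (n - 1 - (i : ℕ) + s).choose s := by
        rw [Nat.card_eq_fintype_card, Fintype.card_sigma]
        apply Finset.sum_congr rfl
        intro i _
        rw [Fintype.card_prod, ← Nat.card_eq_fintype_card, ← Nat.card_eq_fintype_card,
          Nat.card_coe_set_eq, Nat.card_coe_set_eq, ncard_ZSet]

/-! #### Linear independence of binomial coefficient sequences -/

lemma binom_indep : ∀ (N k : ℕ) (a b : ℕ → ℕ),
    (∀ s : ℕ, ∑ c ∈ Finset.range N, a c * (c + (s + k)).choose (s + k)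
      = ∑ c ∈ Finset.range N, b c * (c + (s + k)).choose (s + k)) →
    ∀ c, c < N → a c = b c := by
  intro N
  induction N with
  | zero => intro k a b _ c hc; omega
  | succ N ih =>
    intro k a b h
    have key : ∀ s : ℕ, ∑ c ∈ Finset.range N, a (c + 1) * (c + (s + (k + 1))).choose (s + (k + 1))
        = ∑ c ∈ Finset.range N, b (c + 1) * (c + (s + (k + 1))).choose (s + (k + 1)) := by
      intro s
      have h1 := h (s + 1)
      have h0 := h s
      rw [Finset.sum_range_succ', Finset.sum_range_succ'] at h1 h0
      -- rewrite pascal in h1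
      have hsplit : ∀ f : ℕ → ℕ,
          (∑ c ∈ Finset.range N, f (c + 1) * ((c + 1) + (s + 1 + k)).choose (s + 1 + k))
          = (∑ c ∈ Finset.range N, f (c + 1) * ((c + 1) + (s + k)).choose (s + k))
            + ∑ c ∈ Finset.range N, f (c + 1) * (c + (s + (k + 1))).choose (s + (k + 1)) := by
        intro f
        rw [← Finset.sum_add_distrib]
        apply Finset.sum_congr rfl
        intro c _
        have e1 : (c + 1) + (s + 1 + k) = ((c + 1) + (s + k)) + 1 := by omega
        have e2 : s + 1 + k = (s + k) + 1 := by omega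
        have e5 : ((c + 1) + (s + k)).choose ((s + k) + 1)
            = (c + (s + (k + 1))).choose (s + (k + 1)) := by
          congr 1 <;> omega
        rw [e1, e2, Nat.choose_succ_succ', e5, Nat.mul_add]
      rw [hsplit a, hsplit b] at h1
      have hzero1 : (0 + (s + 1 + k)).choose (s + 1 + k) = 1 := by
        rw [Nat.zero_add, Nat.choose_self]
      have hzero0 : (0 + (s + k)).choose (s + k) = 1 := by
        rw [Nat.zero_add, Nat.choose_self]
      rw [hzero1] at h1
      rw [hzero0] at h0
      omega
    have htail : ∀ c, c < N → a (c + 1) = b (c + 1) := ih (k + 1) _ _ key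
    intro c hc
    rcases c with _ | c'
    · -- use h 0
      have h0 := h 0
      rw [Finset.sum_range_succ', Finset.sum_range_succ'] at h0
      have hteq : (∑ c ∈ Finset.range N, a (c + 1) * ((c + 1) + (0 + k)).choose (0 + k))
          = ∑ c ∈ Finset.range N, b (c + 1) * ((c + 1) + (0 + k)).choose (0 + k) := by
        apply Finset.sum_congr rfl
        intro c hcm
        rw [htail c (Finset.mem_range.mp hcm)]
      have hck : (0 + (0 + k)).choose (0 + k) = 1 := by
        rw [Nat.zero_add, Nat.zero_add, Nat.choose_self]
      rw [hck] at h0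
      omega
    · exact htail c' (by omega)

/-! #### Slices above degree `d` are determined by the degree-`d` slice -/

lemma monSlice_ge_eq {d t : ℕ} (hdt : d ≤ t) {I : Ideal (MvPolynomial (Fin n) K)}
    (hgen : ∀ u : Mono n, d ≤ mdeg u → monomial u (1 : K) ∈ I → ∃ v ∈ monSlice I d, v ≤ u) :
    monSlice I t = {u : Mono n | mdeg u = t ∧ ∃ v ∈ monSlice I d, v ≤ u} := by
  ext u
  constructor
  · rintro ⟨hdeg, hu⟩
    exact ⟨hdeg, hgen u (by omega) hu⟩
  · rintro ⟨hdeg, v, hv, hle⟩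
    exact ⟨hdeg, monomial_mem_of_le hv.2 hle⟩

end Aux

/-- two `d`-lexsegment ideals with the same Hilbert function coincide. -/
theorem stmt7 (n d : ℕ) (hn : 0 < n) (hd : 0 < d) (K : Type) [Field K]
    (I J : Ideal (MvPolynomial (Fin n) K)) (hI : DLexIdeal d I) (hJ : DLexIdeal d J)
    (h : ∀ t : ℕ, hfI I t = hfI J t) : I = J := by
  classical
  obtain ⟨hIm, hIlin, hIgen, hIlow⟩ := hI
  obtain ⟨hJm, hJlin, hJgen, hJlow⟩ := hJ
  have hcard : ∀ t, (monSlice I t).ncard = (monSlice J t).ncard := fun t => by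
    rw [← hfI_eq_ncard hIm, ← hfI_eq_ncard hJm, h]
  -- Step 0 : reindexing of the counting sums
  have hsum : ∀ (V : Set (Mono n)) (g : ℕ → ℕ),
      (∀ c, ∀ hc : c < n, g c = (topVar V ⟨n - 1 - c, by omega⟩).ncard) → ∀ s : ℕ,
      ∑ i : Fin n, (topVar V i).ncard * (n - 1 - (i : ℕ) + s).choose s
        = ∑ c ∈ Finset.range n, g c * (c + s).choose s := by
    intro V g hg s
    set F : ℕ → ℕ := fun j => if hj : j < n then
      (topVar V ⟨j, hj⟩).ncard * ((n - 1 - j + s).choose s) else 0 with hF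
    have h1 : ∑ i : Fin n, (topVar V i).ncard * (n - 1 - (i : ℕ) + s).choose s
        = ∑ i : Fin n, F (i : ℕ) := by
      apply Finset.sum_congr rfl
      intro i _
      rw [hF]
      simp only [dif_pos i.isLt]
    have h2 : ∑ i : Fin n, F (i : ℕ) = ∑ j ∈ Finset.range n, F j :=
      Fin.sum_univ_eq_sum_range F n
    have h3 : ∑ j ∈ Finset.range n, F j = ∑ j ∈ Finset.range n, F (n - 1 - j) :=
      (Finset.sum_range_reflect F n).symm
    have h4 : ∑ j ∈ Finset.range n, F (n - 1 - j)
        = ∑ c ∈ Finset.range n, g c * (c + s).choose s := by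
      apply Finset.sum_congr rfl
      intro c hcm
      have hc : c < n := Finset.mem_range.mp hcm
      have hc' : n - 1 - c < n := by omega
      rw [hF]
      simp only [dif_pos hc']
      rw [hg c hc]
      congr 2
      omega
    rw [h1, h2, h3, h4]
  -- Step 1 : the cardinalities of the `topVar` pieces agree
  have htop : ∀ i : Fin n,
      (topVar (monSlice I d) i).ncard = (topVar (monSlice J d) i).ncard := by
    set a : ℕ → ℕ := fun c => if hc : c < n then
      (topVar (monSlice I d) ⟨n - 1 - c, by omega⟩).ncard else 0 with ha
    set b : ℕ → ℕ := fun c => if hc : c < n then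
      (topVar (monSlice J d) ⟨n - 1 - c, by omega⟩).ncard else 0 with hb
    have hab : ∀ s : ℕ, ∑ c ∈ Finset.range n, a c * (c + (s + 0)).choose (s + 0)
        = ∑ c ∈ Finset.range n, b c * (c + (s + 0)).choose (s + 0) := by
      intro s
      have hI' := ncard_monSlice_add hd hIlin.2.1 hIgen s
      have hJ' := ncard_monSlice_add hd hJlin.2.1 hJgen s
      have hc := hcard (d + s)
      rw [hI', hJ'] at hc
      rw [hsum (monSlice I d) a (fun c hc => by rw [ha]; simp only [dif_pos hc]) s] at hc
      rw [hsum (monSlice J d) b (fun c hc => by rw [hb]; simp only [dif_pos hc]) s] at hc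
      exact hc
    have hkey := binom_indep n 0 a b hab
    intro i
    have hlt : n - 1 - (i : ℕ) < n := by have := i.isLt; omega
    have h1 := hkey (n - 1 - (i : ℕ)) hlt
    rw [ha, hb] at h1
    simp only [dif_pos hlt] at h1
    have hieq : (⟨n - 1 - (n - 1 - (i : ℕ)), by omega⟩ : Fin n) = i :=
      Fin.ext (by have := i.isLt; simp; omega)
    rw [hieq] at h1
    exact h1
  -- Step 2 : the sets `Dk` agree
  have hdegDkI : ∀ i : Fin n, ∀ w ∈ Dk (monSlice I d) i, mdeg w = d - 1 := by
    intro i w hw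
    have := hw.1.1
    rw [mdeg_add, mdeg_single] at this
    omega
  have hdegDkJ : ∀ i : Fin n, ∀ w ∈ Dk (monSlice J d) i, mdeg w = d - 1 := by
    intro i w hw
    have := hw.1.1
    rw [mdeg_add, mdeg_single] at this
    omega
  have hDkcardI : ∀ i : Fin n,
      (Dk (monSlice I d) i).ncard = (topVar (monSlice I d) i).ncard := fun i => by
    rw [topVar_eq_image, Set.ncard_image_of_injective _ (add_left_injective _)]
  have hDkcardJ : ∀ i : Fin n,
      (Dk (monSlice J d) i).ncard = (topVar (monSlice J d) i).ncard := fun i => by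
    rw [topVar_eq_image, Set.ncard_image_of_injective _ (add_left_injective _)]
  have hDk : ∀ i : Fin n, Dk (monSlice I d) i = Dk (monSlice J d) i := by
    intro i
    apply lexseg_unique (t := d - 1) (k := (i : ℕ) + 1) (hdegDkI i) (hdegDkJ i)
      (hIlin.2.2 i) (hJlin.2.2 i)
      (finite_of_mdeg_eq (hdegDkI i)) (finite_of_mdeg_eq (hdegDkJ i))
    rw [hDkcardI i, hDkcardJ i, htop i]
  -- Step 3 : the degree-`d` slices agree
  have hVW : monSlice I d = monSlice J d := by
    have htopeq : ∀ i : Fin n, topVar (monSlice I d) i = topVar (monSlice J d) i := fun i => by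
      rw [topVar_eq_image, topVar_eq_image, hDk i]
    ext u
    constructor
    · intro hu
      obtain ⟨i, hi⟩ := mem_topVar_of_mem (by rw [hu.1]; omega) hu
      exact ((htopeq i) ▸ hi).1
    · intro hu
      obtain ⟨i, hi⟩ := mem_topVar_of_mem (by rw [hu.1]; omega) hu
      exact ((htopeq i).symm ▸ hi).1
  -- Step 4 : all slices agree
  have hslice : ∀ t, monSlice I t = monSlice J t := by
    intro t
    rcases lt_trichotomy t d with hlt | rfl | hgt
    · exact lexseg_unique (t := t) (fun u hu => hu.1) (fun u hu => hu.1)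
        (hIlow t hlt) (hJlow t hlt)
        (finite_of_mdeg_eq fun u hu => hu.1) (finite_of_mdeg_eq fun u hu => hu.1)
        (hcard t)
    · exact hVW
    · rw [monSlice_ge_eq (le_of_lt hgt) hIgen, monSlice_ge_eq (le_of_lt hgt) hJgen, hVW]
  exact monomialIdeal_ext hIm hJm hslice

end Paper
end
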